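/- Let J be a Jordan curve in K² with more than four points, let m ∈ S_J, and write A(m) ∩ J = {a, b, c}, where a and b are both closed points (both coordinates even) and c is an open point (both coordinates odd), or symmetrically a and b are both open and c is closed. Then: (i) J_m = (J ∖ {c}) ∪ {m} is a Jordan curve; (ii) S_{J_m} ⊆ S_J and m ∉ S_{J_m}. -/

import Mathlib

open TopologicalSpace

/-- Basic (minimal) neighborhoods generating the Khalimsky topology on ℤ. -/
def khN (n : ℤ) : Set ℤ := if Odd n then {n} else {n - 1, n, n + 1}

/-- The Khalimsky (digital) topology on the integers. -/
def khLine : TopologicalSpace ℤ := generateFrom (Set.range khN)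

/-- The Khalimsky topology on the digital plane ℤ × ℤ (product topology). -/
def khPlane : TopologicalSpace (ℤ × ℤ) :=
  @instTopologicalSpaceProd ℤ ℤ khLine khLine

/-- A point of the digital plane is pure if both coordinates have the same parity. -/
def IsPure (p : ℤ × ℤ) : Prop := p.1 % 2 = p.2 % 2

/-- A point of the digital plane is mixed if it is not pure. -/
def IsMixed (p : ℤ × ℤ) : Prop := ¬ IsPure p

/-- A closed (pure) point: both coordinates even. -/
def IsClosedPt (p : ℤ × ℤ) : Prop := Even p.1 ∧ Even p.2

/-- An open (pure) point: both coordinates odd. -/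
def IsOpenPt (p : ℤ × ℤ) : Prop := Odd p.1 ∧ Odd p.2

/-- The minimal open neighborhood N(x) of a point in the digital plane. -/
def minN (x : ℤ × ℤ) : Set (ℤ × ℤ) := ⋂₀ {U : Set (ℤ × ℤ) | khPlane.IsOpen U ∧ x ∈ U}

/-- The closure cl(x) of a singleton in the digital plane. -/
def clPt (x : ℤ × ℤ) : Set (ℤ × ℤ) := @closure (ℤ × ℤ) khPlane {x}

/-- The adjacency set A(x) of a point of the digital plane. -/
def AdjSet (x : ℤ × ℤ) : Set (ℤ × ℤ) :=
  {y | y ≠ x ∧ @IsConnected (ℤ × ℤ) khPlane {x, y}}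

/-- An arc: a subset of the digital plane homeomorphic (in the subspace topology)
to a finite interval of the Khalimsky line. -/
def IsArc (C : Set (ℤ × ℤ)) : Prop :=
  ∃ a b : ℤ,
    Nonempty (@Homeomorph (↥C) (↥(Set.Icc a b))
      (TopologicalSpace.induced Subtype.val khPlane)
      (TopologicalSpace.induced Subtype.val khLine))

/-- z is an endpoint of the arc C: it has exactly one adjacent point within C. -/
def IsEndpointOf (z : ℤ × ℤ) (C : Set (ℤ × ℤ)) : Prop :=
  z ∈ C ∧ (AdjSet z ∩ C).encard = 1

/-- A Jordan curve in the digital plane. -/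
def IsJordanCurve (J : Set (ℤ × ℤ)) : Prop :=
  @IsConnected (ℤ × ℤ) khPlane J ∧ 4 ≤ J.encard ∧ ∀ x ∈ J, IsArc (J \ {x})

/-- The slant embedding Γ(x,y) = (x+y, y−x) of the Rosenfeld plane into the digital plane. -/
def Γmap (p : ℤ × ℤ) : ℤ × ℤ := (p.1 + p.2, p.2 - p.1)

/-- The operator Γ* turning subsets of ℤ² into subsets of the digital plane. -/
def ΓStar (A : Set (ℤ × ℤ)) : Set (ℤ × ℤ) :=
  Γmap '' A ∪
    {x | IsMixed x ∧ (minN x ⊆ Γmap '' A ∪ {x} ∨ clPt x ⊆ Γmap '' A ∪ {x})}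

/-- 8-adjacency in ℤ². -/
def Adj8 (p q : ℤ × ℤ) : Prop := p ≠ q ∧ |p.1 - q.1| ≤ 1 ∧ |p.2 - q.2| ≤ 1

/-- 4-adjacency in ℤ². -/
def Adj4 (p q : ℤ × ℤ) : Prop := p ≠ q ∧ |p.1 - q.1| + |p.2 - q.2| = 1

/-- The 8-neighbours of x within C. -/
def nbrs8 (C : Set (ℤ × ℤ)) (x : ℤ × ℤ) : Set (ℤ × ℤ) := {y ∈ C | Adj8 x y}

/-- The 4-neighbours of x within C. -/
def nbrs4 (C : Set (ℤ × ℤ)) (x : ℤ × ℤ) : Set (ℤ × ℤ) := {y ∈ C | Adj4 x y}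

/-- x is an 8-endpoint of C. -/
def Is8Endpoint (C : Set (ℤ × ℤ)) (x : ℤ × ℤ) : Prop :=
  x ∈ C ∧ (nbrs8 C x).encard = 1

/-- x is a 4-endpoint of C. -/
def Is4Endpoint (C : Set (ℤ × ℤ)) (x : ℤ × ℤ) : Prop :=
  x ∈ C ∧ (nbrs4 C x).encard = 1

/-- An 8-path: a finite set with exactly two 8-endpoints, every other point
having exactly two 8-adjacent points in the set. -/
def Is8Path (C : Set (ℤ × ℤ)) : Prop :=
  C.Finite ∧ {x | Is8Endpoint C x}.encard = 2 ∧
    ∀ x ∈ C, ¬ Is8Endpoint C x → (nbrs8 C x).encard = 2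

/-- A 4-path. -/
def Is4Path (C : Set (ℤ × ℤ)) : Prop :=
  C.Finite ∧ {x | Is4Endpoint C x}.encard = 2 ∧
    ∀ x ∈ C, ¬ Is4Endpoint C x → (nbrs4 C x).encard = 2

/-- A closed 8-curve: every point has exactly two 8-adjacent points in the set. -/
def Is8ClosedCurve (C : Set (ℤ × ℤ)) : Prop :=
  C.Finite ∧ ∀ x ∈ C, (nbrs8 C x).encard = 2

/-- A closed 4-curve. -/
def Is4ClosedCurve (C : Set (ℤ × ℤ)) : Prop :=
  C.Finite ∧ ∀ x ∈ C, (nbrs4 C x).encard = 2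

/-- 8-connectedness: there is no partition into two nonempty pieces that are
not 8-adjacent to each other. -/
def Conn8 (S : Set (ℤ × ℤ)) : Prop :=
  ¬ ∃ A B : Set (ℤ × ℤ), A.Nonempty ∧ B.Nonempty ∧ A ∪ B = S ∧ A ∩ B = ∅ ∧
      ∀ a ∈ A, ∀ b ∈ B, ¬ Adj8 a b

/-- 4-connectedness. -/
def Conn4 (S : Set (ℤ × ℤ)) : Prop :=
  ¬ ∃ A B : Set (ℤ × ℤ), A.Nonempty ∧ B.Nonempty ∧ A ∪ B = S ∧ A ∩ B = ∅ ∧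
      ∀ a ∈ A, ∀ b ∈ B, ¬ Adj4 a b

/-- T is a 4-component of S: a maximal 4-connected subset of S. -/
def Is4CompOf (T S : Set (ℤ × ℤ)) : Prop :=
  T ⊆ S ∧ Conn4 T ∧ ∀ T' : Set (ℤ × ℤ), T ⊆ T' → T' ⊆ S → Conn4 T' → T' = T

/-- U is a connected component of S in the digital plane. -/
def IsCompOf (U S : Set (ℤ × ℤ)) : Prop :=
  ∃ x ∈ S, @connectedComponentIn (ℤ × ℤ) khPlane S x = U

/-- The set S_J of mixed points of Γ*(Γ⁻¹(J)) having exactly three adjacent points in J. -/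
def SJ (J : Set (ℤ × ℤ)) : Set (ℤ × ℤ) :=
  {m | m ∈ ΓStar (Γmap ⁻¹' J) ∧ IsMixed m ∧ (AdjSet m ∩ J).encard = 3}
namespace KhAux

open TopologicalSpace Topology

/-! ### Khalimsky line basics -/

lemma mem_khN_iff {j n : ℤ} : j ∈ khN n ↔ (j = n ∨ (n % 2 = 0 ∧ (j = n - 1 ∨ j = n + 1))) := by
  unfold khN
  by_cases h : Odd n
  · have hn : n % 2 = 1 := Int.odd_iff.mp h
    simp only [if_pos h, Set.mem_singleton_iff]
    omega
  · have hn : n % 2 = 0 := Int.even_iff.mp (Int.not_odd_iff_even.mp h)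
    simp only [if_neg h, Set.mem_insert_iff, Set.mem_singleton_iff]
    omega

lemma mem_khN_self (n : ℤ) : n ∈ khN n := mem_khN_iff.mpr (Or.inl rfl)

lemma isOpen_khN (n : ℤ) : IsOpen[khLine] (khN n) :=
  TopologicalSpace.isOpen_generateFrom_of_mem ⟨n, rfl⟩

lemma khN_subset_khN {j n : ℤ} (h : j ∈ khN n) : khN j ⊆ khN n := by
  intro i hi
  rw [mem_khN_iff] at h hi ⊢
  omega

lemma khLine_minN {U : Set ℤ} (hU : IsOpen[khLine] U) : ∀ n ∈ U, khN n ⊆ U := by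
  have hU' : TopologicalSpace.GenerateOpen (Set.range khN) U := hU
  clear hU
  induction hU' with
  | basic s hs =>
    rcases hs with ⟨k, rfl⟩
    exact fun n hn => khN_subset_khN hn
  | univ => exact fun n _ => Set.subset_univ _
  | inter s t _ _ ihs iht =>
    exact fun n hn => Set.subset_inter (ihs n hn.1) (iht n hn.2)
  | sUnion S _ ih =>
    rintro n ⟨s, hsS, hns⟩
    exact (ih s hsS n hns).trans (Set.subset_sUnion_of_mem hsS)

/-! ### Khalimsky plane basics -/

lemma khPlane_isOpen_box (p : ℤ × ℤ) : IsOpen[khPlane] (khN p.1 ×ˢ khN p.2) := by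
  letI := khLine
  exact IsOpen.prod (isOpen_khN p.1) (isOpen_khN p.2)

lemma khPlane_minN {U : Set (ℤ × ℤ)} (hU : IsOpen[khPlane] U) {p : ℤ × ℤ} (hp : p ∈ U) :
    khN p.1 ×ˢ khN p.2 ⊆ U := by
  letI := khLine
  rcases (isOpen_prod_iff.mp hU) p.1 p.2 hp with ⟨u, v, hu, hv, h1, h2, huv⟩
  exact (Set.prod_mono (fun i hi => khLine_minN hu _ h1 hi)
    (fun i hi => khLine_minN hv _ h2 hi)).trans huv

/-- Ambient specialization in the Khalimsky plane. -/
def Sp (x y : ℤ × ℤ) : Prop := @Specializes _ khPlane x y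

lemma sp_iff {x y : ℤ × ℤ} : Sp x y ↔ (x.1 ∈ khN y.1 ∧ x.2 ∈ khN y.2) := by
  rw [Sp, @specializes_iff_forall_open _ khPlane]
  constructor
  · intro h
    have := h _ (khPlane_isOpen_box y) ⟨mem_khN_self _, mem_khN_self _⟩
    exact this
  · intro h s hs hys
    exact khPlane_minN hs hys ⟨h.1, h.2⟩

lemma sp_refl (x : ℤ × ℤ) : Sp x x := sp_iff.mpr ⟨mem_khN_self _, mem_khN_self _⟩

lemma sp_coords {x y : ℤ × ℤ} : Sp x y ↔
    ((x.1 = y.1 ∨ (y.1 % 2 = 0 ∧ (x.1 = y.1 - 1 ∨ x.1 = y.1 + 1))) ∧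
     (x.2 = y.2 ∨ (y.2 % 2 = 0 ∧ (x.2 = y.2 - 1 ∨ x.2 = y.2 + 1)))) := by
  rw [sp_iff, mem_khN_iff, mem_khN_iff]

lemma sp_line_iff {i j : ℤ} : (@Specializes _ khLine i j) ↔ i ∈ khN j := by
  rw [@specializes_iff_forall_open _ khLine]
  constructor
  · intro h; exact h _ (isOpen_khN j) (mem_khN_self j)
  · intro h s hs hjs; exact khLine_minN hs _ hjs h

/-! ### Pair connectedness and adjacency -/

lemma sp_pair_conn {x y : ℤ × ℤ} (h : Sp x y) : @IsConnected _ khPlane {x, y} := by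
  letI := khPlane
  refine ⟨⟨x, Or.inl rfl⟩, ?_⟩
  intro u v hu hv hcov hune hvne
  have hx_of : ∀ s : Set (ℤ × ℤ), IsOpen s → y ∈ s → x ∈ s :=
    (@specializes_iff_forall_open _ khPlane x y).mp h
  have hxu : x ∈ u := by
    rcases hune with ⟨z, hz, hzu⟩
    rcases hz with rfl | rfl
    · exact hzu
    · exact hx_of u hu hzu
  have hxv : x ∈ v := by
    rcases hvne with ⟨z, hz, hzv⟩
    rcases hz with rfl | rfl
    · exact hzv
    · exact hx_of v hv hzv
  exact ⟨x, Or.inl rfl, hxu, hxv⟩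

lemma pair_conn_iff {x y : ℤ × ℤ} :
    @IsConnected _ khPlane {x, y} ↔ (Sp x y ∨ Sp y x) := by
  constructor
  · intro h
    by_contra hn
    push_neg at hn
    obtain ⟨h1, h2⟩ := hn
    have hxy : x ∉ khN y.1 ×ˢ khN y.2 := fun hmem => h1 (sp_iff.mpr ⟨hmem.1, hmem.2⟩)
    have hyx : y ∉ khN x.1 ×ˢ khN x.2 := fun hmem => h2 (sp_iff.mpr ⟨hmem.1, hmem.2⟩)
    letI := khPlane
    have hpre := h.isPreconnected
    have := hpre (khN x.1 ×ˢ khN x.2) (khN y.1 ×ˢ khN y.2)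
      (khPlane_isOpen_box x) (khPlane_isOpen_box y)
      (by
        rintro z (rfl | rfl)
        · exact Or.inl ⟨mem_khN_self _, mem_khN_self _⟩
        · exact Or.inr ⟨mem_khN_self _, mem_khN_self _⟩)
      ⟨x, Or.inl rfl, ⟨mem_khN_self _, mem_khN_self _⟩⟩
      ⟨y, Or.inr rfl, ⟨mem_khN_self _, mem_khN_self _⟩⟩
    rcases this with ⟨z, hz, hzx, hzy⟩
    rcases hz with rfl | rfl
    · exact hxy hzy
    · exact hyx hzx
  · rintro (h | h)
    · exact sp_pair_conn h
    · rw [Set.pair_comm]; exact sp_pair_conn h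

lemma mem_adjSet_iff {x y : ℤ × ℤ} : y ∈ AdjSet x ↔ (y ≠ x ∧ (Sp x y ∨ Sp y x)) := by
  unfold AdjSet
  rw [Set.mem_setOf_eq, pair_conn_iff]

lemma adj_comm {x y : ℤ × ℤ} : y ∈ AdjSet x ↔ x ∈ AdjSet y := by
  rw [mem_adjSet_iff, mem_adjSet_iff]
  constructor
  · rintro ⟨h1, h2⟩; exact ⟨h1.symm, h2.symm⟩
  · rintro ⟨h1, h2⟩; exact ⟨h1.symm, h2.symm⟩

lemma not_sp_of_not_adj {x y : ℤ × ℤ} (hne : y ≠ x) (h : y ∉ AdjSet x) :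
    ¬ Sp x y ∧ ¬ Sp y x := by
  constructor
  · intro hs; exact h (mem_adjSet_iff.mpr ⟨hne, Or.inl hs⟩)
  · intro hs; exact h (mem_adjSet_iff.mpr ⟨hne, Or.inr hs⟩)

end KhAux
namespace KhAux

open TopologicalSpace Topology

/-! ### Subspace topology of the Khalimsky plane -/

/-- `IsArc` restated with the subtype-instance topologies. -/
lemma arc_def {C : Set (ℤ × ℤ)} : IsArc C ↔ ∃ a b : ℤ,
    Nonempty (@Homeomorph ↥C ↥(Set.Icc a b)
      (@instTopologicalSpaceSubtype _ _ khPlane)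
      (@instTopologicalSpaceSubtype _ _ khLine)) := Iff.rfl

lemma subtype_isOpen_iff {S : Set (ℤ × ℤ)} {U : Set ↥S} :
    @IsOpen _ (@instTopologicalSpaceSubtype _ _ khPlane) U ↔
      ∀ x ∈ U, ∀ y : ↥S, Sp y.val x.val → y ∈ U := by
  constructor
  · intro hU
    obtain ⟨V, hV, rfl⟩ := hU
    intro x hx y hyx
    have : y.val ∈ V := (@specializes_iff_forall_open _ khPlane _ _).mp hyx V hV hx
    exact this
  · intro h
    refine ⟨⋃ (x : ↥S) (_ : x ∈ U), (khN x.val.1 ×ˢ khN x.val.2), ?_, ?_⟩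
    · letI := khPlane
      exact isOpen_iUnion fun x => isOpen_iUnion fun _ => khPlane_isOpen_box x.val
    · ext y
      simp only [Set.mem_preimage, Set.mem_iUnion]
      constructor
      · rintro ⟨x, hxU, hy⟩
        exact h x hxU y (sp_iff.mpr ⟨hy.1, hy.2⟩)
      · intro hy
        exact ⟨y, hy, mem_khN_self _, mem_khN_self _⟩

/-- A specialization-preserving bijection between subsets of the Khalimsky plane
is a homeomorphism of the subspaces. -/
noncomputable def homeoOfSp {S T : Set (ℤ × ℤ)} (f : ↥S ≃ ↥T)
    (hf : ∀ x y : ↥S, Sp (f x).val (f y).val ↔ Sp x.val y.val) :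
    @Homeomorph ↥S ↥T (@instTopologicalSpaceSubtype _ _ khPlane)
      (@instTopologicalSpaceSubtype _ _ khPlane) := by
  letI : TopologicalSpace (ℤ × ℤ) := khPlane
  refine ⟨f, ⟨?_⟩, ⟨?_⟩⟩
  · intro U hU
    rw [subtype_isOpen_iff] at hU ⊢
    intro x hx y hyx
    exact hU (f x) hx (f y) ((hf y x).mpr hyx)
  · intro U hU
    rw [subtype_isOpen_iff] at hU ⊢
    intro x hx y hyx
    have h2 : Sp (f (f.symm y)).val (f (f.symm x)).val ↔ Sp (f.symm y).val (f.symm x).val :=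
      hf _ _
    rw [f.apply_symm_apply, f.apply_symm_apply] at h2
    exact hU (f.symm x) hx (f.symm y) (h2.mp hyx)

/-! ### The swap construction -/

variable {S : Set (ℤ × ℤ)} {c m : ℤ × ℤ}

/-- The swap equivalence between `S` and `(S \ {c}) ∪ {m}`. -/
noncomputable def swapEquiv (hc : c ∈ S) (hmS : m ∉ S) :
    ↥S ≃ ↥((S \ {c}) ∪ {m}) where
  toFun x := if h : x.val = c then ⟨m, Or.inr rfl⟩ else ⟨x.val, Or.inl ⟨x.2, h⟩⟩
  invFun y := if h : y.val = m then ⟨c, hc⟩ else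
    ⟨y.val, by
      rcases y.2 with hy | hy
      · exact hy.1
      · exact absurd hy h⟩
  left_inv x := by
    by_cases h : x.val = c
    · simp only [h, dif_pos]
      exact Subtype.ext h.symm
    · simp only [dif_neg h]
      have hxm : x.val ≠ m := fun he => hmS (he ▸ x.2)
      rw [dif_neg hxm]
  right_inv y := by
    by_cases h : y.val = m
    · simp only [h, dif_pos]
      exact Subtype.ext h.symm
    · simp only [dif_neg h]
      have hyc : y.val ≠ c := by
        rcases y.2 with hy | hy
        · exact hy.2
        · exact absurd hy h
      rw [dif_neg hyc]

lemma swapEquiv_val (hc : c ∈ S) (hmS : m ∉ S) (x : ↥S) :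
    ((swapEquiv hc hmS) x).val = if x.val = c then m else x.val := by
  unfold swapEquiv
  by_cases h : x.val = c <;> simp [h]

/-- The substitution hypothesis: `m` looks exactly like `c` to every other point of `S`. -/
def SubstOK (S : Set (ℤ × ℤ)) (c m : ℤ × ℤ) : Prop :=
  ∀ y ∈ S, y ≠ c → ((Sp y c ↔ Sp y m) ∧ (Sp c y ↔ Sp m y))

noncomputable def swapHomeo (hc : c ∈ S) (hmS : m ∉ S) (hsub : SubstOK S c m) :
    @Homeomorph ↥S ↥((S \ {c}) ∪ {m})
      (@instTopologicalSpaceSubtype _ _ khPlane)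
      (@instTopologicalSpaceSubtype _ _ khPlane) := by
  refine homeoOfSp (swapEquiv hc hmS) ?_
  intro x y
  rw [swapEquiv_val, swapEquiv_val]
  by_cases hx : x.val = c <;> by_cases hy : y.val = c
  · rw [if_pos hx, if_pos hy, hx, hy]
    exact iff_of_true (sp_refl m) (sp_refl c)
  · rw [if_pos hx, if_neg hy, hx]
    exact ((hsub y.val y.2 hy).2).symm
  · rw [if_neg hx, if_pos hy, hy]
    exact ((hsub x.val x.2 hx).1).symm
  · rw [if_neg hx, if_neg hy]

lemma swap_isArc (hc : c ∈ S) (hmS : m ∉ S) (hsub : SubstOK S c m) (hS : IsArc S) :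
    IsArc ((S \ {c}) ∪ {m}) := by
  rw [arc_def] at hS ⊢
  obtain ⟨a, b, ⟨e⟩⟩ := hS
  exact ⟨a, b, ⟨@Homeomorph.trans _ _ _
    (@instTopologicalSpaceSubtype _ _ khPlane)
    (@instTopologicalSpaceSubtype _ _ khPlane)
    (@instTopologicalSpaceSubtype _ _ khLine)
    (@Homeomorph.symm _ _ (@instTopologicalSpaceSubtype _ _ khPlane)
      (@instTopologicalSpaceSubtype _ _ khPlane) (swapHomeo hc hmS hsub)) e⟩⟩

lemma swap_isConnected (hc : c ∈ S) (hmS : m ∉ S) (hsub : SubstOK S c m)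
    (hS : @IsConnected _ khPlane S) : @IsConnected _ khPlane ((S \ {c}) ∪ {m}) := by
  letI : TopologicalSpace (ℤ × ℤ) := khPlane
  have e0 := swapHomeo hc hmS hsub
  have h1 : ConnectedSpace ↥S := isConnected_iff_connectedSpace.mp hS
  have hpc : IsPreconnected (Set.univ : Set ↥((S \ {c}) ∪ {m})) := by
    rw [← e0.surjective.range_eq, ← Set.image_univ]
    exact (IsPreconnected.image
      (PreconnectedSpace.isPreconnected_univ) _ e0.continuous.continuousOn)
  haveI : PreconnectedSpace ↥((S \ {c}) ∪ {m}) := ⟨hpc⟩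
  haveI : Nonempty ↥((S \ {c}) ∪ {m}) := ⟨e0 (⟨c, hc⟩ : ↥S)⟩
  exact isConnected_iff_connectedSpace.mpr (ConnectedSpace.mk inferInstance)

end KhAux
namespace KhAux

open TopologicalSpace Topology

lemma arc_not_three {C : Set (ℤ × ℤ)} (hC : IsArc C) {x y1 y2 y3 : ℤ × ℤ}
    (hx : x ∈ C) (h1 : y1 ∈ AdjSet x) (h1C : y1 ∈ C)
    (h2 : y2 ∈ AdjSet x) (h2C : y2 ∈ C)
    (h3 : y3 ∈ AdjSet x) (h3C : y3 ∈ C)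
    (h12 : y1 ≠ y2) (h13 : y1 ≠ y3) (h23 : y2 ≠ y3) : False := by
  letI : TopologicalSpace ℤ := khLine
  letI : TopologicalSpace (ℤ × ℤ) := khPlane
  rw [arc_def] at hC
  obtain ⟨a, b, ⟨e⟩⟩ := hC
  have key : ∀ {y : ℤ × ℤ} (hyC : y ∈ C), y ∈ AdjSet x →
      ((e ⟨y, hyC⟩).val ∈ khN (e ⟨x, hx⟩).val ∨ (e ⟨x, hx⟩).val ∈ khN (e ⟨y, hyC⟩).val) := by
    intro y hyC hy
    have hcomp : ((⟨x, hx⟩ : ↥C) ⤳ ⟨y, hyC⟩) ∨ ((⟨y, hyC⟩ : ↥C) ⤳ ⟨x, hx⟩) := by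
      rcases (mem_adjSet_iff.mp hy).2 with hs | hs
      · exact Or.inl (Topology.IsInducing.subtypeVal.specializes_iff.mp hs)
      · exact Or.inr (Topology.IsInducing.subtypeVal.specializes_iff.mp hs)
    rcases hcomp with hs | hs
    · refine Or.inr ?_
      have h1 : e ⟨x, hx⟩ ⤳ e ⟨y, hyC⟩ := e.isInducing.specializes_iff.mpr hs
      have h2 : ((e ⟨x, hx⟩).val : ℤ) ⤳ (e ⟨y, hyC⟩).val :=
        Topology.IsInducing.subtypeVal.specializes_iff.mpr h1
      exact sp_line_iff.mp h2
    · refine Or.inl ?_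
      have h1 : e ⟨y, hyC⟩ ⤳ e ⟨x, hx⟩ := e.isInducing.specializes_iff.mpr hs
      have h2 : ((e ⟨y, hyC⟩).val : ℤ) ⤳ (e ⟨x, hx⟩).val :=
        Topology.IsInducing.subtypeVal.specializes_iff.mpr h1
      exact sp_line_iff.mp h2
  have hne : ∀ {y : ℤ × ℤ} (hyC : y ∈ C), y ∈ AdjSet x →
      (e ⟨y, hyC⟩).val ≠ (e ⟨x, hx⟩).val := by
    intro y hyC hy heq
    have : (⟨y, hyC⟩ : ↥C) = ⟨x, hx⟩ := e.injective (Subtype.ext heq)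
    exact (mem_adjSet_iff.mp hy).1 (congrArg Subtype.val this)
  have hne' : ∀ {y z : ℤ × ℤ} (hyC : y ∈ C) (hzC : z ∈ C), y ≠ z →
      (e ⟨y, hyC⟩).val ≠ (e ⟨z, hzC⟩).val := by
    intro y z hyC hzC hyz heq
    exact hyz (congrArg Subtype.val (e.injective (Subtype.ext heq)))
  have d1 := key h1C h1
  have d2 := key h2C h2
  have d3 := key h3C h3
  have e1 := hne h1C h1
  have e2 := hne h2C h2
  have e3 := hne h3C h3
  have f12 := hne' h1C h2C h12
  have f13 := hne' h1C h3C h13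
  have f23 := hne' h2C h3C h23
  rw [mem_khN_iff, mem_khN_iff] at d1 d2 d3
  omega

lemma jordan_no_three {J : Set (ℤ × ℤ)} (hJ : IsJordanCurve J) (hcard : 4 < J.encard)
    {x y1 y2 y3 : ℤ × ℤ} (hx : x ∈ J)
    (h1 : y1 ∈ AdjSet x) (h1J : y1 ∈ J) (h2 : y2 ∈ AdjSet x) (h2J : y2 ∈ J)
    (h3 : y3 ∈ AdjSet x) (h3J : y3 ∈ J)
    (h12 : y1 ≠ y2) (h13 : y1 ≠ y3) (h23 : y2 ≠ y3) : False := by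
  have hw : ∃ w ∈ J, w ∉ ({x, y1, y2, y3} : Set (ℤ × ℤ)) := by
    by_contra hcon
    push_neg at hcon
    have h4 : ({x, y1, y2, y3} : Set (ℤ × ℤ)).encard ≤ 4 := by
      apply le_trans (Set.encard_insert_le _ _)
      apply le_trans (add_le_add (Set.encard_insert_le _ _) (le_refl 1))
      apply le_trans (add_le_add (add_le_add (Set.encard_insert_le _ _) (le_refl 1)) (le_refl 1))
      rw [Set.encard_singleton]
      norm_num
    exact absurd hcard (not_lt.mpr (le_trans (Set.encard_mono hcon) h4))
  obtain ⟨w, hwJ, hwn⟩ := hw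
  simp only [Set.mem_insert_iff, Set.mem_singleton_iff, not_or] at hwn
  obtain ⟨hwx, hw1, hw2, hw3⟩ := hwn
  exact arc_not_three (hJ.2.2 w hwJ)
    (⟨hx, fun h => hwx (Set.mem_singleton_iff.mp h).symm⟩ : x ∈ J \ {w})
    h1 ⟨h1J, fun h => hw1 (Set.mem_singleton_iff.mp h).symm⟩
    h2 ⟨h2J, fun h => hw2 (Set.mem_singleton_iff.mp h).symm⟩
    h3 ⟨h3J, fun h => hw3 (Set.mem_singleton_iff.mp h).symm⟩
    h12 h13 h23

end KhAux
namespace KhAux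

open TopologicalSpace Topology

lemma isClosedPt_iff {p : ℤ × ℤ} : IsClosedPt p ↔ p.1 % 2 = 0 ∧ p.2 % 2 = 0 := by
  unfold IsClosedPt
  rw [Int.even_iff, Int.even_iff]

lemma isOpenPt_iff {p : ℤ × ℤ} : IsOpenPt p ↔ p.1 % 2 = 1 ∧ p.2 % 2 = 1 := by
  unfold IsOpenPt
  rw [Int.odd_iff, Int.odd_iff]

lemma isMixed_iff {p : ℤ × ℤ} : IsMixed p ↔ ¬ (p.1 % 2 = p.2 % 2) := Iff.rfl

/-- The adjacency set of a mixed point is its 4-neighbourhood. -/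
lemma adj_mixed_iff {m : ℤ × ℤ} (hmix : IsMixed m) {y : ℤ × ℤ} :
    y ∈ AdjSet m ↔ (y = (m.1, m.2 - 1) ∨ y = (m.1, m.2 + 1) ∨
      y = (m.1 - 1, m.2) ∨ y = (m.1 + 1, m.2)) := by
  have hpq : ¬ (m.1 % 2 = m.2 % 2) := hmix
  rw [mem_adjSet_iff, sp_coords, sp_coords]
  rw [Ne, Prod.ext_iff, Prod.ext_iff, Prod.ext_iff, Prod.ext_iff, Prod.ext_iff]
  simp only [Prod.fst, Prod.snd]
  omega

lemma mixed_not_adj_mixed {x y : ℤ × ℤ} (h1 : IsMixed x) (h2 : IsMixed y) :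
    y ∉ AdjSet x := by
  intro h
  have h1' : ¬ (x.1 % 2 = x.2 % 2) := h1
  have h2' : ¬ (y.1 % 2 = y.2 % 2) := h2
  rcases (adj_mixed_iff h1).mp h with h | h | h | h <;>
    rw [Prod.ext_iff] at h <;> omega

end KhAux
namespace KhAux

open TopologicalSpace Topology

/-- Two neighbours of a mixed point of opposite pure types are adjacent. -/
lemma adj_diag {m u v : ℤ × ℤ} (hmix : IsMixed m) (hu : u ∈ AdjSet m) (hv : v ∈ AdjSet m)
    (hp : (IsClosedPt u ∧ IsOpenPt v) ∨ (IsOpenPt u ∧ IsClosedPt v)) : v ∈ AdjSet u := by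
  have hpq : ¬ (m.1 % 2 = m.2 % 2) := hmix
  rw [adj_mixed_iff hmix] at hu hv
  simp only [isClosedPt_iff, isOpenPt_iff] at hp
  rw [mem_adjSet_iff, sp_coords, sp_coords, Ne, Prod.ext_iff]
  simp only [Prod.ext_iff, Prod.fst, Prod.snd] at hu hv
  omega

/-- The substitution property: `m` and `c` relate identically to `a`. -/
lemma sub_geom {m a c : ℤ × ℤ} (hmix : IsMixed m) (ha : a ∈ AdjSet m) (hc : c ∈ AdjSet m)
    (hp : (IsClosedPt a ∧ IsOpenPt c) ∨ (IsOpenPt a ∧ IsClosedPt c)) :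
    (Sp a c ↔ Sp a m) ∧ (Sp c a ↔ Sp m a) := by
  have hpq : ¬ (m.1 % 2 = m.2 % 2) := hmix
  rw [adj_mixed_iff hmix] at ha hc
  simp only [isClosedPt_iff, isOpenPt_iff] at hp
  rw [sp_coords, sp_coords, sp_coords, sp_coords]
  simp only [Prod.ext_iff, Prod.fst, Prod.snd] at ha hc
  omega

/-- A mixed point is determined by a pair of its same-type neighbours. -/
lemma mixed_determined {m m' a b : ℤ × ℤ} (h : IsMixed m) (h' : IsMixed m')
    (ha : a ∈ AdjSet m) (hb : b ∈ AdjSet m) (ha' : a ∈ AdjSet m') (hb' : b ∈ AdjSet m')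
    (hab : a ≠ b)
    (hp : (IsClosedPt a ∧ IsClosedPt b) ∨ (IsOpenPt a ∧ IsOpenPt b)) : m' = m := by
  have h1 : ¬ (m.1 % 2 = m.2 % 2) := h
  have h2 : ¬ (m'.1 % 2 = m'.2 % 2) := h'
  rw [adj_mixed_iff h] at ha hb
  rw [adj_mixed_iff h'] at ha' hb'
  simp only [isClosedPt_iff, isOpenPt_iff] at hp
  simp only [Prod.ext_iff, Prod.fst, Prod.snd] at ha hb ha' hb'
  rw [Prod.ext_iff]
  rw [Ne, Prod.ext_iff] at hab
  omega

lemma adj_of_diag {c1 c2 z1 z2 : ℤ}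
    (hcp : (c1 % 2 = 0 ∧ c2 % 2 = 0) ∨ (c1 % 2 = 1 ∧ c2 % 2 = 1))
    (h1 : z1 = c1 - 1 ∨ z1 = c1 + 1) (h2 : z2 = c2 - 1 ∨ z2 = c2 + 1) :
    (z1, z2) ∈ AdjSet (c1, c2) := by
  simp only [mem_adjSet_iff, sp_coords, Ne, Prod.mk.injEq]
  omega

/-- Given a pure point `c` adjacent to a mixed point `m'`, produce the three other
neighbours of `m'`, two of which (the ones of type opposite to `c`) are adjacent to `c`. -/
lemma other_three {m' c : ℤ × ℤ} (hmix' : IsMixed m') (hc : c ∈ AdjSet m')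
    (hcp : IsClosedPt c ∨ IsOpenPt c) :
    ∃ u v w : ℤ × ℤ, u ∈ AdjSet m' ∧ v ∈ AdjSet m' ∧
      u ≠ v ∧ u ≠ w ∧ v ≠ w ∧ c ≠ u ∧ c ≠ v ∧ c ≠ w ∧
      (∀ z ∈ AdjSet m', z = c ∨ z = u ∨ z = v ∨ z = w) ∧
      u ∈ AdjSet c ∧ v ∈ AdjSet c ∧
      (IsOpenPt c → IsClosedPt u ∧ IsClosedPt v) ∧
      (IsClosedPt c → IsOpenPt u ∧ IsOpenPt v) := by
  have hpq : ¬ (m'.1 % 2 = m'.2 % 2) := hmix'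
  have hcp' : (c.1 % 2 = 0 ∧ c.2 % 2 = 0) ∨ (c.1 % 2 = 1 ∧ c.2 % 2 = 1) := by
    rcases hcp with h | h
    · exact Or.inl (isClosedPt_iff.mp h)
    · exact Or.inr (isOpenPt_iff.mp h)
  clear hcp
  have hall : ∀ z ∈ AdjSet m', z = (m'.1, m'.2 - 1) ∨ z = (m'.1, m'.2 + 1) ∨
      z = (m'.1 - 1, m'.2) ∨ z = (m'.1 + 1, m'.2) :=
    fun z hz => (adj_mixed_iff hmix').mp hz
  have mem1 : (m'.1, m'.2 - 1) ∈ AdjSet m' := (adj_mixed_iff hmix').mpr (Or.inl rfl)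
  have mem2 : (m'.1, m'.2 + 1) ∈ AdjSet m' := (adj_mixed_iff hmix').mpr (Or.inr (Or.inl rfl))
  have mem3 : (m'.1 - 1, m'.2) ∈ AdjSet m' :=
    (adj_mixed_iff hmix').mpr (Or.inr (Or.inr (Or.inl rfl)))
  have mem4 : (m'.1 + 1, m'.2) ∈ AdjSet m' :=
    (adj_mixed_iff hmix').mpr (Or.inr (Or.inr (Or.inr rfl)))
  rcases (adj_mixed_iff hmix').mp hc with h | h | h | h <;> subst h <;>
    simp only [Prod.fst, Prod.snd] at hcp'
  · -- c = (m'.1, m'.2 - 1)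
    refine ⟨(m'.1 - 1, m'.2), (m'.1 + 1, m'.2), (m'.1, m'.2 + 1), mem3, mem4, ?_, ?_, ?_, ?_, ?_, ?_, ?_, ?_, ?_, ?_, ?_⟩
    · simp only [ne_eq, Prod.mk.injEq]; omega
    · simp only [ne_eq, Prod.mk.injEq]; omega
    · simp only [ne_eq, Prod.mk.injEq]; omega
    · simp only [ne_eq, Prod.mk.injEq]; omega
    · simp only [ne_eq, Prod.mk.injEq]; omega
    · simp only [ne_eq, Prod.mk.injEq]; omega
    · intro z hz
      rcases hall z hz with h2 | h2 | h2 | h2 <;> subst h2 <;> simp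
    · refine adj_of_diag hcp' ?_ ?_ <;> first | (left; omega) | (right; omega)
    · refine adj_of_diag hcp' ?_ ?_ <;> first | (left; omega) | (right; omega)
    · intro hco; simp only [isOpenPt_iff, Prod.fst, Prod.snd] at hco
      simp only [isClosedPt_iff, Prod.fst, Prod.snd]; omega
    · intro hco; simp only [isClosedPt_iff, Prod.fst, Prod.snd] at hco
      simp only [isOpenPt_iff, Prod.fst, Prod.snd]; omega
  · -- c = (m'.1, m'.2 + 1)
    refine ⟨(m'.1 - 1, m'.2), (m'.1 + 1, m'.2), (m'.1, m'.2 - 1), mem3, mem4, ?_, ?_, ?_, ?_, ?_, ?_, ?_, ?_, ?_, ?_, ?_⟩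
    · simp only [ne_eq, Prod.mk.injEq]; omega
    · simp only [ne_eq, Prod.mk.injEq]; omega
    · simp only [ne_eq, Prod.mk.injEq]; omega
    · simp only [ne_eq, Prod.mk.injEq]; omega
    · simp only [ne_eq, Prod.mk.injEq]; omega
    · simp only [ne_eq, Prod.mk.injEq]; omega
    · intro z hz
      rcases hall z hz with h2 | h2 | h2 | h2 <;> subst h2 <;> simp
    · refine adj_of_diag hcp' ?_ ?_ <;> first | (left; omega) | (right; omega)
    · refine adj_of_diag hcp' ?_ ?_ <;> first | (left; omega) | (right; omega)
    · intro hco; simp only [isOpenPt_iff, Prod.fst, Prod.snd] at hco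
      simp only [isClosedPt_iff, Prod.fst, Prod.snd]; omega
    · intro hco; simp only [isClosedPt_iff, Prod.fst, Prod.snd] at hco
      simp only [isOpenPt_iff, Prod.fst, Prod.snd]; omega
  · -- c = (m'.1 - 1, m'.2)
    refine ⟨(m'.1, m'.2 - 1), (m'.1, m'.2 + 1), (m'.1 + 1, m'.2), mem1, mem2, ?_, ?_, ?_, ?_, ?_, ?_, ?_, ?_, ?_, ?_, ?_⟩
    · simp only [ne_eq, Prod.mk.injEq]; omega
    · simp only [ne_eq, Prod.mk.injEq]; omega
    · simp only [ne_eq, Prod.mk.injEq]; omega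
    · simp only [ne_eq, Prod.mk.injEq]; omega
    · simp only [ne_eq, Prod.mk.injEq]; omega
    · simp only [ne_eq, Prod.mk.injEq]; omega
    · intro z hz
      rcases hall z hz with h2 | h2 | h2 | h2 <;> subst h2 <;> simp
    · refine adj_of_diag hcp' ?_ ?_ <;> first | (left; omega) | (right; omega)
    · refine adj_of_diag hcp' ?_ ?_ <;> first | (left; omega) | (right; omega)
    · intro hco; simp only [isOpenPt_iff, Prod.fst, Prod.snd] at hco
      simp only [isClosedPt_iff, Prod.fst, Prod.snd]; omega
    · intro hco; simp only [isClosedPt_iff, Prod.fst, Prod.snd] at hco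
      simp only [isOpenPt_iff, Prod.fst, Prod.snd]; omega
  · -- c = (m'.1 + 1, m'.2)
    refine ⟨(m'.1, m'.2 - 1), (m'.1, m'.2 + 1), (m'.1 - 1, m'.2), mem1, mem2, ?_, ?_, ?_, ?_, ?_, ?_, ?_, ?_, ?_, ?_, ?_⟩
    · simp only [ne_eq, Prod.mk.injEq]; omega
    · simp only [ne_eq, Prod.mk.injEq]; omega
    · simp only [ne_eq, Prod.mk.injEq]; omega
    · simp only [ne_eq, Prod.mk.injEq]; omega
    · simp only [ne_eq, Prod.mk.injEq]; omega
    · simp only [ne_eq, Prod.mk.injEq]; omega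
    · intro z hz
      rcases hall z hz with h2 | h2 | h2 | h2 <;> subst h2 <;> simp
    · refine adj_of_diag hcp' ?_ ?_ <;> first | (left; omega) | (right; omega)
    · refine adj_of_diag hcp' ?_ ?_ <;> first | (left; omega) | (right; omega)
    · intro hco; simp only [isOpenPt_iff, Prod.fst, Prod.snd] at hco
      simp only [isClosedPt_iff, Prod.fst, Prod.snd]; omega
    · intro hco; simp only [isClosedPt_iff, Prod.fst, Prod.snd] at hco
      simp only [isOpenPt_iff, Prod.fst, Prod.snd]; omega

end KhAux
namespace KhAux

open TopologicalSpace Topology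

lemma pure_gamma (z : ℤ × ℤ) : IsPure (Γmap z) := by
  unfold IsPure Γmap
  simp only [Prod.fst, Prod.snd]
  omega

lemma encard_le_two {α : Type*} (s : Set α) (p q : α) (hs : s ⊆ {p, q}) :
    s.encard ≠ 3 := by
  intro h
  have h2 : ({p, q} : Set α).encard ≤ 2 := by
    apply le_trans (Set.encard_insert_le _ _)
    rw [Set.encard_singleton]
    norm_num
  have := (Set.encard_mono hs).trans h2
  rw [h] at this
  norm_num at this

lemma encard3_distinct {α : Type*} {a b c : α} (h : ({a, b, c} : Set α).encard = 3) :
    a ≠ b ∧ a ≠ c ∧ b ≠ c := by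
  refine ⟨?_, ?_, ?_⟩ <;> intro he
  · subst he
    exact encard_le_two _ a c (by intro z hz; simp only [Set.mem_insert_iff, Set.mem_singleton_iff] at hz ⊢; tauto)
      (by rwa [Set.insert_eq_of_mem (Set.mem_insert _ _)] at h)
  · subst he
    exact encard_le_two _ a b (by
      intro z hz
      simp only [Set.mem_insert_iff, Set.mem_singleton_iff] at hz ⊢
      tauto) h
  · subst he
    exact encard_le_two _ a b (by
      intro z hz
      simp only [Set.mem_insert_iff, Set.mem_singleton_iff] at hz ⊢
      tauto) h

end KhAux
open KhAux in
/-- For a Jordan curve J with more than four points and m ∈ S_J with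
A(m) ∩ J = {a,b,c} where a, b are closed and c is open (or symmetrically),
J_m = (J ∖ {c}) ∪ {m} is a Jordan curve, S_{J_m} ⊆ S_J and m ∉ S_{J_m}. -/
theorem jordan_curve_modification (J : Set (ℤ × ℤ)) (m a b c : ℤ × ℤ)
    (hJ : IsJordanCurve J) (hcard : 4 < J.encard) (hm : m ∈ SJ J)
    (habc : AdjSet m ∩ J = {a, b, c})
    (hpar : (IsClosedPt a ∧ IsClosedPt b ∧ IsOpenPt c) ∨
      (IsOpenPt a ∧ IsOpenPt b ∧ IsClosedPt c)) :
    IsJordanCurve ((J \ {c}) ∪ {m}) ∧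
      SJ ((J \ {c}) ∪ {m}) ⊆ SJ J ∧ m ∉ SJ ((J \ {c}) ∪ {m}) := by
  classical
  obtain ⟨hΓm, hmix, h3⟩ := hm
  -- memberships of a, b, c
  have haJ : a ∈ AdjSet m ∩ J := by rw [habc]; simp
  have hbJ : b ∈ AdjSet m ∩ J := by rw [habc]; simp
  have hcJ : c ∈ AdjSet m ∩ J := by rw [habc]; simp
  -- distinctness
  have hdist : a ≠ b ∧ a ≠ c ∧ b ≠ c := by
    rw [habc] at h3
    exact encard3_distinct h3
  obtain ⟨hab, hac, hbc⟩ := hdist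
  -- parity repackagings
  have hpac : (IsClosedPt a ∧ IsOpenPt c) ∨ (IsOpenPt a ∧ IsClosedPt c) := by
    rcases hpar with h | h
    · exact Or.inl ⟨h.1, h.2.2⟩
    · exact Or.inr ⟨h.1, h.2.2⟩
  have hpbc : (IsClosedPt b ∧ IsOpenPt c) ∨ (IsOpenPt b ∧ IsClosedPt c) := by
    rcases hpar with h | h
    · exact Or.inl ⟨h.2.1, h.2.2⟩
    · exact Or.inr ⟨h.2.1, h.2.2⟩
  have hpab : (IsClosedPt a ∧ IsClosedPt b) ∨ (IsOpenPt a ∧ IsOpenPt b) := by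
    rcases hpar with h | h
    · exact Or.inl ⟨h.1, h.2.1⟩
    · exact Or.inr ⟨h.1, h.2.1⟩
  have hcpure : IsClosedPt c ∨ IsOpenPt c := by
    rcases hpar with h | h
    · exact Or.inr h.2.2
    · exact Or.inl h.2.2
  -- m is not on J
  have hmJ : m ∉ J := fun hmem =>
    jordan_no_three hJ hcard hmem haJ.1 haJ.2 hbJ.1 hbJ.2 hcJ.1 hcJ.2 hab hac hbc
  -- a and b are adjacent to c
  have hpca : (IsClosedPt c ∧ IsOpenPt a) ∨ (IsOpenPt c ∧ IsClosedPt a) := by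
    rcases hpac with h | h
    · exact Or.inr ⟨h.2, h.1⟩
    · exact Or.inl ⟨h.2, h.1⟩
  have hpcb : (IsClosedPt c ∧ IsOpenPt b) ∨ (IsOpenPt c ∧ IsClosedPt b) := by
    rcases hpbc with h | h
    · exact Or.inr ⟨h.2, h.1⟩
    · exact Or.inl ⟨h.2, h.1⟩
  have haAc : a ∈ AdjSet c := adj_diag hmix hcJ.1 haJ.1 hpca
  have hbAc : b ∈ AdjSet c := adj_diag hmix hcJ.1 hbJ.1 hpcb
  -- the only points of J adjacent to c are a and b
  have hAc : ∀ z, z ∈ AdjSet c → z ∈ J → z = a ∨ z = b := by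
    intro z hz hzJ
    by_contra hcon
    push_neg at hcon
    exact jordan_no_three hJ hcard hcJ.2 haAc haJ.2 hbAc hbJ.2 hz hzJ hab
      (fun h => hcon.1 h.symm) (fun h => hcon.2 h.symm)
  -- everything in J that is adjacent to m is a, b or c
  have hAm : ∀ z, z ∈ AdjSet m → z ∈ J → z = a ∨ z = b ∨ z = c := by
    intro z hz hzJ
    have : z ∈ ({a, b, c} : Set (ℤ × ℤ)) := habc ▸ ⟨hz, hzJ⟩
    simpa using this
  -- the substitution property on J
  have hsubJ : SubstOK J c m := by
    intro y hyJ hyc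
    by_cases hya : y = a
    · subst hya; exact sub_geom hmix haJ.1 hcJ.1 hpac
    by_cases hyb : y = b
    · subst hyb; exact sub_geom hmix hbJ.1 hcJ.1 hpbc
    have hyadjc : y ∉ AdjSet c := by
      intro h
      rcases hAc y h hyJ with h1 | h1
      · exact hya h1
      · exact hyb h1
    have hyadjm : y ∉ AdjSet m := by
      intro h
      rcases hAm y h hyJ with h1 | h1 | h1
      · exact hya h1
      · exact hyb h1
      · exact hyc h1
    have hym : y ≠ m := fun h => hmJ (h ▸ hyJ)
    have hnc := not_sp_of_not_adj hyc hyadjc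
    have hnm := not_sp_of_not_adj hym hyadjm
    exact ⟨iff_of_false hnc.2 hnm.2, iff_of_false hnc.1 hnm.1⟩
  -- Part (i): J_m is a Jordan curve
  have hJm : IsJordanCurve ((J \ {c}) ∪ {m}) := by
    refine ⟨?_, ?_, ?_⟩
    · exact swap_isConnected hcJ.2 hmJ hsubJ hJ.1
    · have he : ((J \ {c}) ∪ {m}).encard = J.encard := by
        rw [Set.union_singleton, Set.encard_insert_of_notMem (fun h => hmJ h.1)]
        exact Set.encard_diff_singleton_add_one hcJ.2
      rw [he]
      exact le_of_lt hcard
    · intro x hx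
      by_cases hxm : x = m
      · rw [hxm]
        have heq : ((J \ {c}) ∪ {m}) \ {m} = J \ {c} := by
          ext z
          simp only [Set.mem_diff, Set.mem_union, Set.mem_singleton_iff]
          constructor
          · rintro ⟨h1 | h1, h2⟩
            · exact h1
            · exact absurd h1 h2
          · intro h
            exact ⟨Or.inl h, fun he => hmJ (he ▸ h.1)⟩
        rw [heq]
        exact hJ.2.2 c hcJ.2
      · have hxJ : x ∈ J \ {c} := by
          rcases hx with h | h
          · exact h
          · exact absurd h hxm
        have harc := hJ.2.2 x hxJ.1
        have hcS : c ∈ J \ {x} := ⟨hcJ.2, fun h => hxJ.2 (by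
          rw [Set.mem_singleton_iff] at h ⊢
          exact h.symm)⟩
        have hmS : m ∉ J \ {x} := fun h => hmJ h.1
        have hsubS : SubstOK (J \ {x}) c m := fun y hy => hsubJ y hy.1
        have harc2 := swap_isArc hcS hmS hsubS harc
        have heq : ((J \ {c}) ∪ {m}) \ {x} = ((J \ {x}) \ {c}) ∪ {m} := by
          ext z
          simp only [Set.mem_diff, Set.mem_union, Set.mem_singleton_iff]
          constructor
          · rintro ⟨h1 | h1, h2⟩
            · exact Or.inl ⟨⟨h1.1, h2⟩, h1.2⟩
            · exact Or.inr h1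
          · rintro (⟨⟨h1, h2⟩, h3⟩ | h1)
            · exact ⟨Or.inl ⟨h1, h3⟩, h2⟩
            · exact ⟨Or.inr h1, fun he => hxm (by rw [← he, h1])⟩
        rw [heq]
        exact harc2
  -- the adjacency set of m in J_m
  have hAmJm : AdjSet m ∩ ((J \ {c}) ∪ {m}) = {a, b} := by
    ext z
    simp only [Set.mem_inter_iff, Set.mem_union, Set.mem_diff, Set.mem_singleton_iff,
      Set.mem_insert_iff]
    constructor
    · rintro ⟨hz, (⟨hzJ, hzc⟩ | hzm)⟩
      · rcases hAm z hz hzJ with h | h | h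
        · exact Or.inl h
        · exact Or.inr h
        · exact absurd h hzc
      · exact absurd rfl ((mem_adjSet_iff.mp (hzm ▸ hz)).1)
    · rintro (rfl | rfl)
      · exact ⟨haJ.1, Or.inl ⟨haJ.2, hac⟩⟩
      · exact ⟨hbJ.1, Or.inl ⟨hbJ.2, hbc⟩⟩
  -- Part (iii): m ∉ S_{J_m}
  have hmnot : m ∉ SJ ((J \ {c}) ∪ {m}) := by
    rintro ⟨_, _, h3'⟩
    rw [hAmJm, Set.encard_pair hab] at h3'
    norm_num at h3'
  refine ⟨hJm, ?_, hmnot⟩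
  -- Part (ii): S_{J_m} ⊆ S_J
  intro m' hm'full
  obtain ⟨hΓ', hmix', h3'⟩ := hm'full
  have hm'm : m' ≠ m := by
    intro h
    exact hmnot (h ▸ (⟨hΓ', hmix', h3'⟩ : m' ∈ SJ ((J \ {c}) ∪ {m})))
  -- transfer of the ΓStar condition
  have hΓnew : m' ∈ ΓStar (Γmap ⁻¹' J) := by
    rcases hΓ' with him | hcond
    · exfalso
      obtain ⟨z, _, rfl⟩ := him
      exact hmix' (pure_gamma z)
    · obtain ⟨hmx, hcond⟩ := hcond
      have hmono : Γmap '' (Γmap ⁻¹' ((J \ {c}) ∪ {m})) ⊆ Γmap '' (Γmap ⁻¹' J) := by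
        rintro _ ⟨z, hz, rfl⟩
        rw [Set.mem_preimage] at hz
        rcases hz with hz1 | hz1
        · exact ⟨z, hz1.1, rfl⟩
        · exact absurd (hz1 ▸ pure_gamma z) hmix
      refine Or.inr ⟨hmx, ?_⟩
      rcases hcond with h | h
      · exact Or.inl (h.trans (Set.union_subset_union_left _ hmono))
      · exact Or.inr (h.trans (Set.union_subset_union_left _ hmono))
  have hmnotadj : m ∉ AdjSet m' := mixed_not_adj_mixed hmix' hmix
  have hsplit : AdjSet m' ∩ ((J \ {c}) ∪ {m}) = AdjSet m' ∩ (J \ {c}) := by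
    ext z
    constructor
    · rintro ⟨hz, (h | h)⟩
      · exact ⟨hz, h⟩
      · exact absurd (h ▸ hz) hmnotadj
    · rintro ⟨hz, h⟩
      exact ⟨hz, Or.inl h⟩
  rw [hsplit] at h3'
  by_cases hcadj : c ∈ AdjSet m'
  · exfalso
    obtain ⟨u, v, w, huA, hvA, huv, huw, hvw, hcu, hcv, hcw, hall4, huc, hvc, hocl, hclo⟩ :=
      other_three hmix' hcadj hcpure
    have huJ : u ∈ J := by
      by_contra hu
      refine encard_le_two _ v w ?_ h3'
      rintro z ⟨hz, hzJ, hzc⟩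
      rcases hall4 z hz with rfl | rfl | rfl | rfl
      · exact absurd rfl hzc
      · exact absurd hzJ hu
      · exact Or.inl rfl
      · exact Or.inr rfl
    have hvJ : v ∈ J := by
      by_contra hv
      refine encard_le_two _ u w ?_ h3'
      rintro z ⟨hz, hzJ, hzc⟩
      rcases hall4 z hz with rfl | rfl | rfl | rfl
      · exact absurd rfl hzc
      · exact Or.inl rfl
      · exact absurd hzJ hv
      · exact Or.inr rfl
    have hua : u = a ∨ u = b := hAc u huc huJ
    have hva : v = a ∨ v = b := hAc v hvc hvJ
    have habM' : a ∈ AdjSet m' ∧ b ∈ AdjSet m' := by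
      rcases hua with h1 | h1 <;> rcases hva with h2 | h2
      · exact absurd (h1.trans h2.symm) huv
      · exact ⟨h1 ▸ huA, h2 ▸ hvA⟩
      · exact ⟨h2 ▸ hvA, h1 ▸ huA⟩
      · exact absurd (h1.trans h2.symm) huv
    exact hm'm (mixed_determined hmix hmix' haJ.1 hbJ.1 habM'.1 habM'.2 hab hpab)
  · have heq2 : AdjSet m' ∩ (J \ {c}) = AdjSet m' ∩ J := by
      ext z
      constructor
      · rintro ⟨hz, hzJ⟩
        exact ⟨hz, hzJ.1⟩
      · rintro ⟨hz, hzJ⟩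
        exact ⟨hz, hzJ, fun h => hcadj (h ▸ hz)⟩
    exact ⟨hΓnew, hmix', by rw [← heq2]; exact h3'⟩
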